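/- Let G be a finite simple graph with m(G) = 2^β(G), and let S be a vertex cover of G of minimum size |S| = β(G). Then S is an independent set of G. -/

import Mathlib

variable {V : Type*}

/-- `S` is an independent set of `G`: no two vertices of `S` are adjacent. -/
def IsIndepSet (G : SimpleGraph V) (S : Set V) : Prop :=
  ∀ ⦃u v : V⦄, u ∈ S → v ∈ S → ¬ G.Adj u v

/-- `S` is a maximal independent set of `G`. -/
def IsMaxIndepSet (G : SimpleGraph V) (S : Set V) : Prop :=
  IsIndepSet G S ∧ ∀ T : Set V, IsIndepSet G T → S ⊆ T → S = T

/-- `m(G)`: the number of maximal independent sets of `G`. -/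
noncomputable def numMaxIndep (G : SimpleGraph V) : ℕ :=
  {S : Set V | IsMaxIndepSet G S}.ncard

/-- `C` is a vertex cover of `G`: every edge has at least one endpoint in `C`. -/
def IsVertexCover (G : SimpleGraph V) (C : Set V) : Prop :=
  ∀ ⦃u v : V⦄, G.Adj u v → u ∈ C ∨ v ∈ C

/-- `β(G)`: the minimum size of a vertex cover of `G`. -/
noncomputable def coverNumber (G : SimpleGraph V) : ℕ :=
  sInf {n : ℕ | ∃ C : Set V, IsVertexCover G C ∧ C.ncard = n}

/-- `M` is a matching of `G`: a set of edges of `G`, pairwise sharing no vertex. -/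
def IsMatching (G : SimpleGraph V) (M : Set (Sym2 V)) : Prop :=
  M ⊆ G.edgeSet ∧ ∀ e ∈ M, ∀ f ∈ M, e ≠ f → ∀ v : V, v ∈ e → v ∉ f

/-- `M` is an induced matching of `G`: a matching such that no two distinct
edges of `M` are joined by an edge of `G`. -/
def IsInducedMatching (G : SimpleGraph V) (M : Set (Sym2 V)) : Prop :=
  IsMatching G M ∧ ∀ e ∈ M, ∀ f ∈ M, e ≠ f → ∀ u v : V, u ∈ e → v ∈ f → ¬ G.Adj u v

/-- `ν(G)`: the maximum size of a matching of `G`. -/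
noncomputable def matchingNumber (G : SimpleGraph V) : ℕ :=
  sSup {n : ℕ | ∃ M : Set (Sym2 V), IsMatching G M ∧ M.ncard = n}

/-- `ν₀(G)`: the maximum size of an induced matching of `G`. -/
noncomputable def inducedMatchingNumber (G : SimpleGraph V) : ℕ :=
  sSup {n : ℕ | ∃ M : Set (Sym2 V), IsInducedMatching G M ∧ M.ncard = n}

/-- `G` is bipartite: the vertices split into two sides with every edge crossing. -/
def IsBipartite (G : SimpleGraph V) : Prop :=
  ∃ A : Set V, ∀ ⦃u v : V⦄, G.Adj u v → (u ∈ A ↔ v ∉ A)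


private lemma mem_of_maxIndep_aux [Fintype V] (G : SimpleGraph V) {S : Set V}
    (hS : IsVertexCover G S) {T : Set V} (hT : IsMaxIndepSet G T) {v : V}
    (hv : v ∉ S) (hadj : ∀ a ∈ T ∩ S, ¬ G.Adj v a) : v ∈ T := by
  have key : ∀ w ∈ T, ¬ G.Adj v w := by
    intro w hw hvw
    by_cases hwS : w ∈ S
    · exact hadj w ⟨hw, hwS⟩ hvw
    · rcases hS hvw with h | h
      · exact hv h
      · exact hwS h
  have hind : IsIndepSet G (insert v T) := by
    intro u w hu hw hadj'
    rcases Set.mem_insert_iff.mp hu with h1 | hu'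
    · subst h1
      rcases Set.mem_insert_iff.mp hw with h2 | hw'
      · subst h2
        exact G.loopless.irrefl _ hadj'
      · exact key w hw' hadj'
    · rcases Set.mem_insert_iff.mp hw with h2 | hw'
      · subst h2
        exact key u hu' hadj'.symm
      · exact hT.1 hu' hw' hadj'
  have h := hT.2 _ hind (Set.subset_insert v T)
  rw [h]
  exact Set.mem_insert v T

private lemma inter_inj_aux [Fintype V] (G : SimpleGraph V) {S : Set V}
    (hS : IsVertexCover G S) {T T' : Set V} (hT : IsMaxIndepSet G T)
    (hT' : IsMaxIndepSet G T') (h : T ∩ S = T' ∩ S) : T ⊆ T' := by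
  intro v hv
  by_cases hvS : v ∈ S
  · have : v ∈ T' ∩ S := h ▸ (⟨hv, hvS⟩ : v ∈ T ∩ S)
    exact this.1
  · refine mem_of_maxIndep_aux G hS hT' hvS ?_
    intro a ha
    have : a ∈ T ∩ S := h ▸ ha
    exact hT.1 hv this.1

/-- If `m(G) = 2 ^ β(G)` and `S` is a minimum vertex cover of `G`,
then `S` is an independent set of `G`. -/
theorem minCover_isIndep_of_extremal [Fintype V] (G : SimpleGraph V)
    (hm : numMaxIndep G = 2 ^ coverNumber G)
    (S : Set V) (hS : IsVertexCover G S) (hcard : S.ncard = coverNumber G) :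
    IsIndepSet G S := by
  classical
  let f : {T : Set V // IsMaxIndepSet G T} → Set S :=
    fun T => {a : S | (a : V) ∈ T.1}
  have hinj : Function.Injective f := by
    intro T T' h
    have hinter : T.1 ∩ S = T'.1 ∩ S := by
      ext v
      constructor
      · rintro ⟨hv, hvS⟩
        have : (⟨v, hvS⟩ : S) ∈ f T := hv
        rw [h] at this
        exact ⟨this, hvS⟩
      · rintro ⟨hv, hvS⟩
        have : (⟨v, hvS⟩ : S) ∈ f T' := hv
        rw [← h] at this
        exact ⟨this, hvS⟩
    exact Subtype.ext (Set.Subset.antisymm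
      (inter_inj_aux G hS T.2 T'.2 hinter)
      (inter_inj_aux G hS T'.2 T.2 hinter.symm))
  have hcard2 : Nat.card {T : Set V // IsMaxIndepSet G T} = Nat.card (Set S) := by
    have h1 : Nat.card {T : Set V // IsMaxIndepSet G T} = numMaxIndep G :=
      Nat.card_coe_set_eq _
    have h2 : Nat.card (Set S) = 2 ^ coverNumber G := by
      have : Fintype S := S.toFinite.fintype
      rw [Nat.card_eq_fintype_card, Fintype.card_set, ← hcard,
        Set.ncard_eq_toFinset_card', Set.toFinset_card]
    rw [h1, h2, hm]
  have hbij : Function.Bijective f :=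
    (Nat.bijective_iff_injective_and_card f).mpr ⟨hinj, hcard2⟩
  obtain ⟨T, hT⟩ := hbij.2 (Set.univ : Set S)
  have hsub : S ⊆ T.1 := by
    intro v hv
    have : (⟨v, hv⟩ : S) ∈ f T := by rw [hT]; trivial
    exact this
  intro u v hu hv
  exact T.2.1 (hsub hu) (hsub hv)
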